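/- NMI(𝔸,𝔻) = 1 if and only if the partitions 𝔸 and 𝔻 of {1,…,n} are equal, provided both partitions are nontrivial (i.e., H(𝔸) > 0 and H(𝔻) > 0). -/

import Mathlib

open Finset

/-- Mutual information between two partitions of `{1,…,n}`:
`I(𝔸,𝔻) = ∑_{k,j} (|C_k ∩ D_j|/n) log(n|C_k ∩ D_j|/(|C_k||D_j|))`
(empty-intersection terms vanish since `0·log 0 = 0` with `Real.log 0 = 0`). -/
noncomputable def partitionMI (n : ℕ)
    (A B : Finpartition (Finset.univ : Finset (Fin n))) : ℝ :=
  ∑ C ∈ A.parts, ∑ D ∈ B.parts,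
    (((C ∩ D).card : ℝ) / n) *
      Real.log ((n * ((C ∩ D).card : ℝ)) / ((C.card : ℝ) * (D.card : ℝ)))

/-- Entropy of a partition of `{1,…,n}`: `H(𝔸) = −∑_k (|C_k|/n) log(|C_k|/n)`. -/
noncomputable def partitionEntropy (n : ℕ)
    (A : Finpartition (Finset.univ : Finset (Fin n))) : ℝ :=
  -∑ C ∈ A.parts, ((C.card : ℝ) / n) * Real.log ((C.card : ℝ) / n)

private lemma sum_inter_card (n : ℕ) (B : Finpartition (Finset.univ : Finset (Fin n)))
    (C : Finset (Fin n)) : ∑ D ∈ B.parts, (((C ∩ D).card : ℕ)) = C.card := by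
  rw [← Finset.card_biUnion]
  · congr 1
    ext x
    simp only [Finset.mem_biUnion, Finset.mem_inter]
    constructor
    · rintro ⟨D, _, hx, _⟩; exact hx
    · intro hx
      obtain ⟨D, hD, hxD⟩ := B.exists_mem (Finset.mem_univ x)
      exact ⟨D, hD, hx, hxD⟩
  · intro D hD D' hD' hne
    exact (B.disjoint hD hD' hne).mono inter_subset_right inter_subset_right

private lemma entropy_sub_MI (n : ℕ) (hn : 0 < n)
    (A B : Finpartition (Finset.univ : Finset (Fin n))) :
    partitionEntropy n A - partitionMI n A B =
      ∑ C ∈ A.parts, ∑ D ∈ B.parts,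
        (((C ∩ D).card : ℝ) / n) * Real.log ((D.card : ℝ) / ((C ∩ D).card : ℝ)) := by
  have hn' : (n : ℝ) ≠ 0 := Nat.cast_ne_zero.mpr hn.ne'
  rw [eq_comm]
  calc ∑ C ∈ A.parts, ∑ D ∈ B.parts,
        (((C ∩ D).card : ℝ) / n) * Real.log ((D.card : ℝ) / ((C ∩ D).card : ℝ))
      = ∑ C ∈ A.parts, ∑ D ∈ B.parts,
        (-((((C ∩ D).card : ℝ) / n) * Real.log ((C.card : ℝ) / n))
          - (((C ∩ D).card : ℝ) / n) *
            Real.log ((n * ((C ∩ D).card : ℝ)) / ((C.card : ℝ) * (D.card : ℝ)))) := by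
        refine Finset.sum_congr rfl fun C hC => Finset.sum_congr rfl fun D hD => ?_
        rcases Nat.eq_zero_or_pos (C ∩ D).card with hm | hm
        · simp [hm]
        · have hmC : 0 < C.card := lt_of_lt_of_le hm (Finset.card_le_card inter_subset_left)
          have hmD : 0 < D.card := lt_of_lt_of_le hm (Finset.card_le_card inter_subset_right)
          have hm' : ((C ∩ D).card : ℝ) ≠ 0 := Nat.cast_ne_zero.mpr hm.ne'
          have hC' : (C.card : ℝ) ≠ 0 := Nat.cast_ne_zero.mpr hmC.ne'
          have hD' : (D.card : ℝ) ≠ 0 := Nat.cast_ne_zero.mpr hmD.ne'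
          rw [Real.log_div hD' hm', Real.log_div hC' hn',
            Real.log_div (by positivity) (by positivity),
            Real.log_mul hn' hm', Real.log_mul hC' hD']
          ring
    _ = ∑ C ∈ A.parts,
        ((∑ D ∈ B.parts, -((((C ∩ D).card : ℝ) / n) * Real.log ((C.card : ℝ) / n)))
          - ∑ D ∈ B.parts, (((C ∩ D).card : ℝ) / n) *
            Real.log ((n * ((C ∩ D).card : ℝ)) / ((C.card : ℝ) * (D.card : ℝ)))) := by
        exact Finset.sum_congr rfl fun C _ => Finset.sum_sub_distrib _ _
    _ = partitionEntropy n A - partitionMI n A B := by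
        rw [partitionEntropy, partitionMI, Finset.sum_sub_distrib]
        have : ∀ C ∈ A.parts,
            ∑ D ∈ B.parts, -((((C ∩ D).card : ℝ) / n) * Real.log ((C.card : ℝ) / n))
              = -(((C.card : ℝ) / n) * Real.log ((C.card : ℝ) / n)) := by
          intro C _
          rw [Finset.sum_neg_distrib, ← Finset.sum_mul, ← Finset.sum_div, ← Nat.cast_sum,
            sum_inter_card]
        rw [Finset.sum_congr rfl this, Finset.sum_neg_distrib]

private lemma MI_symm (n : ℕ) (A B : Finpartition (Finset.univ : Finset (Fin n))) :
    partitionMI n A B = partitionMI n B A := by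
  rw [partitionMI, partitionMI, Finset.sum_comm]
  refine Finset.sum_congr rfl fun D _ => Finset.sum_congr rfl fun C _ => ?_
  rw [Finset.inter_comm, mul_comm (C.card : ℝ)]

private lemma g_nonneg (n : ℕ) (C D : Finset (Fin n)) :
    0 ≤ (((C ∩ D).card : ℝ) / n) * Real.log ((D.card : ℝ) / ((C ∩ D).card : ℝ)) := by
  rcases Nat.eq_zero_or_pos (C ∩ D).card with hm | hm
  · simp [hm]
  · have hle : ((C ∩ D).card : ℝ) ≤ (D.card : ℝ) :=
      Nat.cast_le.mpr (Finset.card_le_card inter_subset_right)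
    have hm' : (0:ℝ) < ((C ∩ D).card : ℝ) := by exact_mod_cast hm
    have h1 : (1:ℝ) ≤ (D.card : ℝ) / ((C ∩ D).card : ℝ) := (one_le_div hm').mpr hle
    exact mul_nonneg (div_nonneg (Nat.cast_nonneg _) (Nat.cast_nonneg _))
      (Real.log_nonneg h1)

private lemma refines_of_sum_eq_zero (n : ℕ)
    (A B : Finpartition (Finset.univ : Finset (Fin n)))
    (h : ∑ C ∈ A.parts, ∑ D ∈ B.parts,
        (((C ∩ D).card : ℝ) / n) * Real.log ((D.card : ℝ) / ((C ∩ D).card : ℝ)) = 0)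
    {C D : Finset (Fin n)} (hC : C ∈ A.parts) (hD : D ∈ B.parts)
    (hne : (C ∩ D).Nonempty) : D ⊆ C := by
  have h1 := (Finset.sum_eq_zero_iff_of_nonneg fun C _ =>
    Finset.sum_nonneg fun D _ => g_nonneg n C D).mp h C hC
  have h2 := (Finset.sum_eq_zero_iff_of_nonneg fun D _ => g_nonneg n C D).mp h1 D hD
  have hm : 0 < (C ∩ D).card := Finset.card_pos.mpr hne
  have hm' : (0:ℝ) < ((C ∩ D).card : ℝ) := by exact_mod_cast hm
  have hnn : (0:ℝ) < n := by
    have : (C ∩ D).card ≤ n := le_trans (Finset.card_le_card (Finset.subset_univ _))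
      (by simp)
    exact_mod_cast lt_of_lt_of_le hm this
  have hlog : Real.log ((D.card : ℝ) / ((C ∩ D).card : ℝ)) = 0 := by
    rcases mul_eq_zero.mp h2 with h' | h'
    · exact absurd h' (div_pos hm' hnn).ne'
    · exact h'
  have hle : ((C ∩ D).card : ℝ) ≤ (D.card : ℝ) :=
    Nat.cast_le.mpr (Finset.card_le_card inter_subset_right)
  have hone : (D.card : ℝ) / ((C ∩ D).card : ℝ) = 1 := by
    rcases Real.log_eq_zero.mp hlog with h' | h' | h'
    · exact absurd h' (div_pos (lt_of_lt_of_le hm' hle) hm').ne'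
    · exact h'
    · nlinarith [(one_le_div hm').mpr hle]
  have hcard : (D.card : ℝ) = ((C ∩ D).card : ℝ) := by
    field_simp at hone
    exact_mod_cast hone
  have : C ∩ D = D := Finset.eq_of_subset_of_card_le inter_subset_right
    (by exact_mod_cast hcard.le)
  intro x hx
  exact Finset.mem_inter.mp (this ▸ hx) |>.1

private lemma MI_self (n : ℕ) (hn : 0 < n) (A : Finpartition (Finset.univ : Finset (Fin n))) :
    partitionMI n A A = partitionEntropy n A := by
  rw [partitionMI, partitionEntropy, ← Finset.sum_neg_distrib]
  refine Finset.sum_congr rfl fun C hC => ?_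
  rw [Finset.sum_eq_single_of_mem C hC]
  · have hc : 0 < C.card := Finset.card_pos.mpr (A.nonempty_of_mem_parts hC)
    have hc' : (0:ℝ) < (C.card : ℝ) := by exact_mod_cast hc
    have hn' : (0:ℝ) < (n : ℝ) := by exact_mod_cast hn
    rw [Finset.inter_self, show ((n:ℝ) * C.card) / ((C.card:ℝ) * C.card) = ((C.card:ℝ)/n)⁻¹
      by field_simp, Real.log_inv]
    ring
  · intro D hD hne
    have : C ∩ D = ∅ := Finset.disjoint_iff_inter_eq_empty.mp
      (A.disjoint hC hD (Ne.symm hne))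
    simp [this]

/-- For nontrivial partitions (positive entropies), `NMI(𝔸,𝔻) = 1` if and only if
the two partitions are equal. -/
theorem NMI_eq_one_iff (n : ℕ) (hn : 0 < n)
    (A B : Finpartition (Finset.univ : Finset (Fin n)))
    (hA : 0 < partitionEntropy n A) (hB : 0 < partitionEntropy n B) :
    partitionMI n A B / ((partitionEntropy n A + partitionEntropy n B) / 2) = 1 ↔
      A = B := by
  have hd : (0:ℝ) < (partitionEntropy n A + partitionEntropy n B) / 2 := by linarith
  constructor
  · intro h
    have hI : partitionMI n A B = (partitionEntropy n A + partitionEntropy n B) / 2 :=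
      (div_eq_one_iff_eq hd.ne').mp h
    have e1 := entropy_sub_MI n hn A B
    have e2 := entropy_sub_MI n hn B A
    rw [← MI_symm n A B] at e2
    have s1 : 0 ≤ partitionEntropy n A - partitionMI n A B :=
      e1 ▸ Finset.sum_nonneg fun C _ => Finset.sum_nonneg fun D _ => g_nonneg n C D
    have s2 : 0 ≤ partitionEntropy n B - partitionMI n A B :=
      e2 ▸ Finset.sum_nonneg fun D _ => Finset.sum_nonneg fun C _ => g_nonneg n D C
    have z1 : partitionEntropy n A - partitionMI n A B = 0 := by linarith
    have z2 : partitionEntropy n B - partitionMI n A B = 0 := by linarith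
    have r1 : ∀ {C D : Finset (Fin n)}, C ∈ A.parts → D ∈ B.parts →
        (C ∩ D).Nonempty → D ⊆ C := fun hC hD hne =>
      refines_of_sum_eq_zero n A B (by rw [← e1]; exact z1) hC hD hne
    have r2 : ∀ {C D : Finset (Fin n)}, C ∈ B.parts → D ∈ A.parts →
        (C ∩ D).Nonempty → D ⊆ C := fun hC hD hne =>
      refines_of_sum_eq_zero n B A (by rw [← e2]; exact z2) hC hD hne
    have key : ∀ C ∈ A.parts, C ∈ B.parts := by
      intro C hC
      obtain ⟨x, hx⟩ := A.nonempty_of_mem_parts hC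
      obtain ⟨D, hD, hxD⟩ := B.exists_mem (Finset.mem_univ x)
      have hne : (C ∩ D).Nonempty := ⟨x, Finset.mem_inter.mpr ⟨hx, hxD⟩⟩
      have hne' : (D ∩ C).Nonempty := by rwa [Finset.inter_comm]
      have : C = D := Finset.Subset.antisymm (r2 hD hC hne') (r1 hC hD hne)
      rwa [this]
    have key' : ∀ D ∈ B.parts, D ∈ A.parts := by
      intro D hD
      obtain ⟨x, hx⟩ := B.nonempty_of_mem_parts hD
      obtain ⟨C, hC, hxC⟩ := A.exists_mem (Finset.mem_univ x)
      have hne : (C ∩ D).Nonempty := ⟨x, Finset.mem_inter.mpr ⟨hxC, hx⟩⟩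
      have hne' : (D ∩ C).Nonempty := by rwa [Finset.inter_comm]
      have : C = D := Finset.Subset.antisymm (r2 hD hC hne') (r1 hC hD hne)
      rwa [← this]
    ext1
    exact Finset.Subset.antisymm key key'
  · rintro rfl
    rw [MI_self n hn A]
    field_simp
    norm_num
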